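/- arXiv:2410.07651 — 2 statements merged into one kernel-verified Lean document; each statement's English description precedes it below -/
import Mathlib

section
/- Let α > 0, r₂ > 0, β ∈ (0,1), γ > 0, ν ≥ 0, and ν₁, c₁, r₁ ∈ ℝ. Set d̄ = 1/√β, b̄ = ν₁·d̄, ā = 2√(γν), ā₁ = 2√(γν) − b̄, ā₂ = −2√(γν) − b̄, f₂₁ = 2·[ −(1/(4γ))·( ā·e^{−ā²/2}/√(2π) + (1/2)·erfc(ā/√2) ) + (ν/2)·erfc(ā/√2) ], f₂₂₁ = −(1/(4γ))·( (ā₁ + 2b̄)·e^{−ā₁²/2}/√(2π) + ((b̄² + 1)/2)·erfc(ā₁/√2) ) + (ν/2)·erfc(ā₁/√2), and f₂₂₂ = −(1/(4γ))·( −(ā₂ + 2b̄)·e^{−ā₂²/2}/√(2π) + ((b̄² + 1)/2)·erfc(−ā₂/√2) ) + (ν/2)·erfc(−ā₂/√2). Then inf_{γ_sq>0}( γ_sq·r₂ + α·r₂/(4γ_sq) ) − ν₁c₁ − γr₁² − νβ + (1−β)·∫_ℝ min( ν − h²/(4γ), 0 ) dγ₁(h) + β·∫_ℝ min( ν − (h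 + b̄)²/(4γ), 0 ) dγ₁(h) = − ν₁c₁ − γr₁² − νβ + (1−β)·f₂₁ + β·(f₂₂₁ + f₂₂₂) + √α·r₂. -/
open MeasureTheory ProbabilityTheory Real

/-- The error function `erf x = (2/√π) ∫₀ˣ e^{-t²} dt`. -/
noncomputable def erf (x : ℝ) : ℝ := (2 / Real.sqrt π) * ∫ t in (0:ℝ)..x, Real.exp (-t ^ 2)

/-- The complementary error function `erfc x = 1 - erf x`. -/
noncomputable def erfc (x : ℝ) : ℝ := 1 - erf x

open Filter Set Topology

lemma hasDerivAt_erf (x : ℝ) : HasDerivAt erf ((2 / Real.sqrt π) * Real.exp (-x ^ 2)) x := by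
  have hc : Continuous fun t : ℝ => Real.exp (-t ^ 2) := by continuity
  exact (intervalIntegral.integral_hasDerivAt_right (hc.intervalIntegrable _ _)
    hc.stronglyMeasurable.stronglyMeasurableAtFilter hc.continuousAt).const_mul _

lemma integrableOn_exp_neg_sq : IntegrableOn (fun t : ℝ => Real.exp (-t ^ 2)) (Ioi 0) := by
  have := integrable_exp_neg_mul_sq (b := (1:ℝ)) one_pos
  simpa using this.integrableOn

lemma tendsto_erf_atTop : Tendsto erf atTop (𝓝 1) := by
  have h1 : Tendsto (fun x : ℝ => ∫ t in (0:ℝ)..x, Real.exp (-t ^ 2)) atTop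
      (𝓝 (∫ t in Ioi (0:ℝ), Real.exp (-t ^ 2))) :=
    intervalIntegral_tendsto_integral_Ioi 0 integrableOn_exp_neg_sq tendsto_id
  have h2 : (∫ t in Ioi (0:ℝ), Real.exp (-t ^ 2)) = Real.sqrt π / 2 := by
    have := integral_gaussian_Ioi 1
    simpa using this
  rw [h2] at h1
  have h3 := h1.const_mul (2 / Real.sqrt π)
  have hπ : Real.sqrt π ≠ 0 := by positivity
  have : 2 / Real.sqrt π * (Real.sqrt π / 2) = 1 := by field_simp
  rw [this] at h3
  exact h3.congr (fun x => rfl)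


lemma integrable_g0 : Integrable (fun x : ℝ => Real.exp (-x ^ 2 / 2)) := by
  have := integrable_exp_neg_mul_sq (b := (1:ℝ)/2) (by norm_num)
  exact this.congr (ae_of_all _ fun x => by ring_nf)

lemma integrable_g1 : Integrable (fun x : ℝ => x * Real.exp (-x ^ 2 / 2)) := by
  have := integrable_mul_exp_neg_mul_sq (b := (1:ℝ)/2) (by norm_num)
  exact this.congr (ae_of_all _ fun x => by ring_nf)

lemma key_bound (x : ℝ) : |x| ≤ 2 * Real.exp (x ^ 2 / 4) := by
  have h := Real.add_one_le_exp (x ^ 2 / 4)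
  nlinarith [sq_nonneg (|x| - 1), sq_abs x]

lemma key_bound2 (x : ℝ) : x ^ 2 ≤ 4 * Real.exp (x ^ 2 / 4) := by
  have h := Real.add_one_le_exp (x ^ 2 / 4)
  nlinarith

lemma exp_split (x : ℝ) : Real.exp (-x ^ 2 / 2) = Real.exp (-x ^ 2 / 4) * Real.exp (-x ^ 2 / 4) := by
  rw [← Real.exp_add]; ring_nf

lemma exp_prod (x : ℝ) : Real.exp (x ^ 2 / 4) * Real.exp (-x ^ 2 / 4) = 1 := by
  rw [← Real.exp_add]; ring_nf; exact Real.exp_zero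

lemma integrable_g2 : Integrable (fun x : ℝ => x ^ 2 * Real.exp (-x ^ 2 / 2)) := by
  have hbase : Integrable (fun x : ℝ => 4 * Real.exp (-x ^ 2 / 4)) := by
    have := integrable_exp_neg_mul_sq (b := (1:ℝ)/4) (by norm_num)
    exact (this.congr (ae_of_all _ fun x => by ring_nf)).const_mul 4
  refine hbase.mono' (Continuous.aestronglyMeasurable (by continuity)) (ae_of_all _ fun x => ?_)
  have h2 := key_bound2 x
  have h3 := exp_prod x
  have h4 : (0:ℝ) < Real.exp (-x ^ 2 / 4) := Real.exp_pos _
  rw [Real.norm_eq_abs, abs_of_nonneg (by positivity)]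
  rw [exp_split]
  nlinarith

lemma tendsto_poly_gauss (c₁ c₂ : ℝ) :
    Tendsto (fun x : ℝ => (c₁ + c₂ * x) * Real.exp (-x ^ 2 / 2)) atTop (𝓝 0) := by
  have hg : Tendsto (fun x : ℝ => (|c₁| + 2 * |c₂|) * Real.exp (-x ^ 2 / 4)) atTop (𝓝 0) := by
    have h1 : Tendsto (fun x : ℝ => -x ^ 2 / 4) atTop atBot := by
      apply Filter.Tendsto.atBot_div_const (by norm_num)
      exact tendsto_neg_atBot_iff.mpr (tendsto_pow_atTop (by norm_num))
    have := (Real.tendsto_exp_atBot.comp h1).const_mul (|c₁| + 2 * |c₂|)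
    simpa using this
  apply squeeze_zero_norm _ hg
  intro x
  have h1 : |c₁ + c₂ * x| ≤ |c₁| + |c₂| * |x| := by
    calc |c₁ + c₂ * x| ≤ |c₁| + |c₂ * x| := abs_add_le _ _
    _ = |c₁| + |c₂| * |x| := by rw [abs_mul]
  have h2 := key_bound x
  have h5 : (1:ℝ) ≤ Real.exp (x ^ 2 / 4) := by
    have := Real.add_one_le_exp (x ^ 2 / 4); nlinarith
  have h3 := exp_prod x
  have h4 : (0:ℝ) < Real.exp (-x ^ 2 / 4) := Real.exp_pos _
  have h6 : (0:ℝ) ≤ Real.exp (x ^ 2 / 4) := by positivity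
  rw [Real.norm_eq_abs, abs_mul, abs_of_nonneg (Real.exp_pos _).le, exp_split]
  have habs : |c₁ + c₂ * x| ≤ (|c₁| + 2 * |c₂|) * Real.exp (x ^ 2 / 4) := by
    have : |c₂| * |x| ≤ |c₂| * (2 * Real.exp (x ^ 2 / 4)) :=
      mul_le_mul_of_nonneg_left h2 (abs_nonneg _)
    nlinarith [abs_nonneg c₁, abs_nonneg c₂]
  calc |c₁ + c₂ * x| * (Real.exp (-x ^ 2 / 4) * Real.exp (-x ^ 2 / 4))
      ≤ ((|c₁| + 2 * |c₂|) * Real.exp (x ^ 2 / 4)) * (Real.exp (-x ^ 2 / 4) * Real.exp (-x ^ 2 / 4)) := by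
        apply mul_le_mul_of_nonneg_right habs; positivity
    _ = (|c₁| + 2 * |c₂|) * Real.exp (-x ^ 2 / 4) := by
        rw [show (|c₁| + 2 * |c₂|) * Real.exp (x ^ 2 / 4) * (Real.exp (-x ^ 2 / 4) * Real.exp (-x ^ 2 / 4))
          = (|c₁| + 2 * |c₂|) * (Real.exp (x ^ 2 / 4) * Real.exp (-x ^ 2 / 4)) * Real.exp (-x ^ 2 / 4) by ring, h3]
        ring

lemma integrable_poly_gpdf (c₀ c₁ c₂ : ℝ) :
    Integrable (fun x : ℝ => (c₀ + c₁ * x + c₂ * x ^ 2) * (Real.exp (-x ^ 2 / 2) / Real.sqrt (2 * π))) := by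
  have h : Integrable (fun x : ℝ =>
      (c₀ * Real.exp (-x ^ 2 / 2) + c₁ * (x * Real.exp (-x ^ 2 / 2))
        + c₂ * (x ^ 2 * Real.exp (-x ^ 2 / 2))) / Real.sqrt (2 * π)) :=
    (((integrable_g0.const_mul c₀).add (integrable_g1.const_mul c₁)).add
      (integrable_g2.const_mul c₂)).div_const _
  exact h.congr (ae_of_all _ fun x => by ring)

lemma hasDerivAt_F (c₀ c₁ c₂ x : ℝ) :
    HasDerivAt (fun y : ℝ => -(c₁ + c₂ * y) * (Real.exp (-y ^ 2 / 2) / Real.sqrt (2 * π))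
        + (c₀ + c₂) * ((1/2) * erf (y / Real.sqrt 2)))
      ((c₀ + c₁ * x + c₂ * x ^ 2) * (Real.exp (-x ^ 2 / 2) / Real.sqrt (2 * π))) x := by
  have h0 : HasDerivAt (fun y : ℝ => -y ^ 2 / 2) (-x) x := by
    have := (hasDerivAt_pow 2 x).neg.div_const 2
    exact this.congr_deriv (by norm_num; ring)
  have h_exp : HasDerivAt (fun y : ℝ => Real.exp (-y ^ 2 / 2))
      (Real.exp (-x ^ 2 / 2) * (-x)) x := h0.exp
  have h_lin : HasDerivAt (fun y : ℝ => -(c₁ + c₂ * y)) (-c₂) x := by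
    have := (((hasDerivAt_id x).const_mul c₂).const_add c₁).neg
    exact this.congr_deriv (by simp)
  have h_first := h_lin.mul (h_exp.div_const (Real.sqrt (2 * π)))
  have h_inner : HasDerivAt (fun y : ℝ => y / Real.sqrt 2) (1 / Real.sqrt 2) x := by
    simpa using (hasDerivAt_id x).div_const (Real.sqrt 2)
  have h_erf : HasDerivAt (fun y : ℝ => erf (y / Real.sqrt 2))
      ((2 / Real.sqrt π) * Real.exp (-(x / Real.sqrt 2) ^ 2) * (1 / Real.sqrt 2)) x :=
    by have := (hasDerivAt_erf (x / Real.sqrt 2)).comp x h_inner; exact this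
  have h_second := (h_erf.const_mul (1/2 : ℝ)).const_mul (c₀ + c₂)
  have h := h_first.add h_second
  refine h.congr_deriv (Eq.symm ?_)
  have e1 : (x / Real.sqrt 2) ^ 2 = x ^ 2 / 2 := by
    rw [div_pow, Real.sq_sqrt (by norm_num : (0:ℝ) ≤ 2)]
  have e2 : Real.sqrt (2 * π) = Real.sqrt 2 * Real.sqrt π :=
    Real.sqrt_mul (by norm_num) π
  rw [e1, e2]
  have hπ : (0:ℝ) < Real.sqrt π := Real.sqrt_pos.mpr Real.pi_pos
  have h2 : (0:ℝ) < Real.sqrt 2 := by positivity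
  field_simp
  ring

lemma tendsto_F (c₀ c₁ c₂ : ℝ) :
    Filter.Tendsto (fun y : ℝ => -(c₁ + c₂ * y) * (Real.exp (-y ^ 2 / 2) / Real.sqrt (2 * π))
        + (c₀ + c₂) * ((1/2) * erf (y / Real.sqrt 2)))
      Filter.atTop (𝓝 ((c₀ + c₂) * (1/2))) := by
  have h1 : Filter.Tendsto (fun y : ℝ => -(c₁ + c₂ * y) * (Real.exp (-y ^ 2 / 2) / Real.sqrt (2 * π)))
      Filter.atTop (𝓝 0) := by
    have := (tendsto_poly_gauss (-c₁) (-c₂)).div_const (Real.sqrt (2 * π))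
    rw [zero_div] at this
    exact this.congr (fun y => by ring)
  have h2 : Filter.Tendsto (fun y : ℝ => (c₀ + c₂) * ((1/2) * erf (y / Real.sqrt 2)))
      Filter.atTop (𝓝 ((c₀ + c₂) * ((1/2) * 1))) := by
    have hdiv : Filter.Tendsto (fun y : ℝ => y / Real.sqrt 2) Filter.atTop Filter.atTop :=
      Filter.tendsto_id.atTop_div_const (by positivity)
    exact (((tendsto_erf_atTop.comp hdiv).const_mul (1/2 : ℝ)).const_mul (c₀ + c₂))
  have := h1.add h2
  rw [zero_add] at this
  convert this using 2
  ring

lemma tail_integral (c₀ c₁ c₂ a : ℝ) :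
    ∫ x in Set.Ioi a, (c₀ + c₁ * x + c₂ * x ^ 2) * (Real.exp (-x ^ 2 / 2) / Real.sqrt (2 * π))
      = (c₁ + c₂ * a) * (Real.exp (-a ^ 2 / 2) / Real.sqrt (2 * π))
        + (c₀ + c₂) * ((1/2) * erfc (a / Real.sqrt 2)) := by
  have h := integral_Ioi_of_hasDerivAt_of_tendsto
    (f := fun y : ℝ => -(c₁ + c₂ * y) * (Real.exp (-y ^ 2 / 2) / Real.sqrt (2 * π))
        + (c₀ + c₂) * ((1/2) * erf (y / Real.sqrt 2)))
    (f' := fun x : ℝ => (c₀ + c₁ * x + c₂ * x ^ 2) * (Real.exp (-x ^ 2 / 2) / Real.sqrt (2 * π)))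
    (a := a) (m := (c₀ + c₂) * (1/2))
    ((hasDerivAt_F c₀ c₁ c₂ a).continuousAt.continuousWithinAt)
    (fun x _ => hasDerivAt_F c₀ c₁ c₂ x)
    ((integrable_poly_gpdf c₀ c₁ c₂).integrableOn)
    (tendsto_F c₀ c₁ c₂)
  rw [h]
  unfold erfc
  ring

lemma integral_gaussianReal_eq (f : ℝ → ℝ) :
    ∫ x, f x ∂(gaussianReal 0 1) = ∫ x, f x * (Real.exp (-x ^ 2 / 2) / Real.sqrt (2 * π)) := by
  rw [gaussianReal_of_var_ne_zero _ one_ne_zero]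
  have hpdf : gaussianPDF 0 1 = fun x => ((Real.toNNReal (gaussianPDFReal 0 1 x) : NNReal) : ENNReal) := by
    rfl
  rw [hpdf, integral_withDensity_eq_integral_smul
    ((measurable_gaussianPDFReal 0 1).real_toNNReal) f]
  congr 1
  ext x
  rw [NNReal.smul_def, smul_eq_mul, Real.coe_toNNReal _ (gaussianPDFReal_nonneg 0 1 x)]
  have hg : gaussianPDFReal 0 1 x = Real.exp (-x ^ 2 / 2) / Real.sqrt (2 * π) := by
    unfold gaussianPDFReal
    norm_num
    have h1 : (0:ℝ) < Real.sqrt 2 := by positivity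
    have h2 : (0:ℝ) < Real.sqrt π := Real.sqrt_pos.mpr Real.pi_pos
    field_simp
  rw [hg, mul_comm]

lemma min_closed (γ ν b : ℝ) (hγ : 0 < γ) (hν : 0 ≤ ν) :
    ∫ x : ℝ, min (ν - (x + b) ^ 2 / (4 * γ)) 0 * (Real.exp (-x ^ 2 / 2) / Real.sqrt (2 * π))
    = ((-(b/(2*γ)) + (-(1/(4*γ))) * (2*Real.sqrt (γ*ν) - b)) * (Real.exp (-(2*Real.sqrt (γ*ν) - b) ^ 2 / 2) / Real.sqrt (2 * π))
        + (ν - b^2/(4*γ) + (-(1/(4*γ)))) * ((1/2) * erfc ((2*Real.sqrt (γ*ν) - b) / Real.sqrt 2)))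
      + ((b/(2*γ) + (-(1/(4*γ))) * (2*Real.sqrt (γ*ν) + b)) * (Real.exp (-(2*Real.sqrt (γ*ν) + b) ^ 2 / 2) / Real.sqrt (2 * π))
        + (ν - b^2/(4*γ) + (-(1/(4*γ)))) * ((1/2) * erfc ((2*Real.sqrt (γ*ν) + b) / Real.sqrt 2))) := by
  set A : ℝ := 2 * Real.sqrt (γ * ν) with hA_def
  have hA : 0 ≤ A := by positivity
  have hA2 : A ^ 2 = 4 * (γ * ν) := by
    rw [hA_def, mul_pow, Real.sq_sqrt (by positivity)]
    norm_num
  set g : ℝ → ℝ := fun x => min (ν - (x + b) ^ 2 / (4 * γ)) 0 * (Real.exp (-x ^ 2 / 2) / Real.sqrt (2 * π)) with hg_def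
  have hgcont : Continuous g := by
    rw [hg_def]; continuity
  have hgint : Integrable g := by
    refine (integrable_poly_gpdf (b^2/(4*γ)) (b/(2*γ)) (1/(4*γ))).mono'
      hgcont.aestronglyMeasurable (ae_of_all _ fun x => ?_)
    have hs : (0:ℝ) ≤ (x + b) ^ 2 / (4 * γ) := by positivity
    have habs : |min (ν - (x + b) ^ 2 / (4 * γ)) 0| ≤ (x + b) ^ 2 / (4 * γ) := by
      rw [abs_le]
      exact ⟨le_min (by linarith) (by linarith), (min_le_right _ _).trans hs⟩
    have hgp : (0:ℝ) ≤ Real.exp (-x ^ 2 / 2) / Real.sqrt (2 * π) := by positivity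
    have key : ‖g x‖ ≤ ((x + b) ^ 2 / (4 * γ)) * (Real.exp (-x ^ 2 / 2) / Real.sqrt (2 * π)) := by
      simp only [hg_def, Real.norm_eq_abs, abs_mul, abs_of_nonneg hgp]
      exact mul_le_mul_of_nonneg_right habs hgp
    refine key.trans (le_of_eq ?_)
    field_simp
    ring
  have ha12 : -A - b ≤ A - b := by linarith
  have hsplit : ∫ x : ℝ, g x = (∫ x in Set.Iic (-A - b), g x) + ((∫ x in Set.Ioc (-A - b) (A - b), g x) + ∫ x in Set.Ioi (A - b), g x) := by
    rw [← intervalIntegral.integral_Iic_add_Ioi hgint.integrableOn hgint.integrableOn]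
    congr 1
    rw [← Set.Ioc_union_Ioi_eq_Ioi ha12,
      MeasureTheory.setIntegral_union (Set.Ioc_disjoint_Ioi le_rfl) measurableSet_Ioi
        hgint.integrableOn hgint.integrableOn]
  have hmid : (∫ x in Set.Ioc (-A - b) (A - b), g x) = 0 := by
    have hz : Set.EqOn g (fun _ => (0:ℝ)) (Set.Ioc (-A - b) (A - b)) := by
      intro x hx
      have h1 : -A < x + b := by have := hx.1; simp only [Set.mem_Ioc] at hx; linarith [hx.1]
      have h2 : x + b ≤ A := by simp only [Set.mem_Ioc] at hx; linarith [hx.2]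
      have h3 : (x + b) ^ 2 ≤ A ^ 2 := sq_le_sq' (by linarith) h2
      have h4 : (x + b) ^ 2 / (4 * γ) ≤ ν := by
        rw [div_le_iff₀ (by positivity)]
        nlinarith
      have hmin : min (ν - (x + b) ^ 2 / (4 * γ)) 0 = 0 := min_eq_right (by linarith)
      simp only [hg_def, hmin, zero_mul]
    rw [MeasureTheory.setIntegral_congr_fun measurableSet_Ioc hz, integral_zero]
  have hright : (∫ x in Set.Ioi (A - b), g x)
      = ∫ x in Set.Ioi (A - b), (ν - b^2/(4*γ) + (-(b/(2*γ))) * x + (-(1/(4*γ))) * x ^ 2) * (Real.exp (-x ^ 2 / 2) / Real.sqrt (2 * π)) := by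
    refine MeasureTheory.setIntegral_congr_fun measurableSet_Ioi (fun x hx => ?_)
    have h1 : A ≤ x + b := by have : A - b < x := hx; linarith
    have h4 : ν ≤ (x + b) ^ 2 / (4 * γ) := by
      rw [le_div_iff₀ (by positivity)]
      nlinarith
    have hmin : min (ν - (x + b) ^ 2 / (4 * γ)) 0 = ν - (x + b) ^ 2 / (4 * γ) :=
      min_eq_left (by linarith)
    simp only [hg_def, hmin]
    congr 1
    field_simp
    ring
  have hleft : (∫ x in Set.Iic (-A - b), g x)
      = ∫ x in Set.Ioi (A + b), (ν - b^2/(4*γ) + (b/(2*γ)) * x + (-(1/(4*γ))) * x ^ 2) * (Real.exp (-x ^ 2 / 2) / Real.sqrt (2 * π)) := by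
    have hrefl := integral_comp_neg_Ioi (A + b) g
    have he : -(A + b) = -A - b := by ring
    rw [he] at hrefl
    rw [← hrefl]
    refine MeasureTheory.setIntegral_congr_fun measurableSet_Ioi (fun x hx => ?_)
    have hxgt : A + b < x := hx
    have h1 : -x + b ≤ -A := by linarith
    have h4 : ν ≤ (-x + b) ^ 2 / (4 * γ) := by
      rw [le_div_iff₀ (by positivity)]
      nlinarith
    have hmin : min (ν - (-x + b) ^ 2 / (4 * γ)) 0 = ν - (-x + b) ^ 2 / (4 * γ) :=
      min_eq_left (by linarith)
    have hx2 : (-x) ^ 2 = x ^ 2 := neg_sq x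
    simp only [hg_def, hmin, hx2]
    congr 1
    field_simp
    ring
  rw [hsplit, hmid, hright, hleft, tail_integral, tail_integral]
  ring

lemma sInf_eval (α r₂ : ℝ) (hα : 0 < α) (hr₂ : 0 < r₂) :
    sInf { z : ℝ | ∃ g : ℝ, 0 < g ∧ z = g * r₂ + α * r₂ / (4 * g) } = Real.sqrt α * r₂ := by
  have hs : 0 < Real.sqrt α := Real.sqrt_pos.mpr hα
  have hsq : Real.sqrt α ^ 2 = α := Real.sq_sqrt hα.le
  have hmem : Real.sqrt α * r₂ ∈ { z : ℝ | ∃ g : ℝ, 0 < g ∧ z = g * r₂ + α * r₂ / (4 * g) } := by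
    refine ⟨Real.sqrt α / 2, by positivity, ?_⟩
    field_simp
    linear_combination 4 * hsq
  have hlb : ∀ z ∈ { z : ℝ | ∃ g : ℝ, 0 < g ∧ z = g * r₂ + α * r₂ / (4 * g) },
      Real.sqrt α * r₂ ≤ z := by
    rintro z ⟨g, hg, rfl⟩
    have h4g : (0:ℝ) < 4 * g := by linarith
    rw [← mul_le_mul_iff_of_pos_right h4g]
    have he : (g * r₂ + α * r₂ / (4 * g)) * (4 * g) = 4 * g ^ 2 * r₂ + α * r₂ := by
      field_simp
    rw [he]
    nlinarith [sq_nonneg (2 * g - Real.sqrt α), hr₂.le]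
  exact le_antisymm (csInf_le ⟨Real.sqrt α * r₂, hlb⟩ hmem) (le_csInf ⟨_, hmem⟩ hlb)


/-- Closed-form evaluation of the first level (`r = 1`) of the lifted random dual
`ψ̄_rd^{(1)}` of the ℓ₀ ML decoding for the binary signal. -/
theorem stmt8 (α r₂ β γ ν ν₁ c₁ r₁ : ℝ) (hα : 0 < α) (hr₂ : 0 < r₂)
    (hβ : β ∈ Set.Ioo (0:ℝ) 1) (hγ : 0 < γ) (hν : 0 ≤ ν)
    (dbar bbar abar a₁ a₂ f21 f221 f222 : ℝ)
    (hd : dbar = 1 / Real.sqrt β) (hb : bbar = ν₁ * dbar)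
    (ha : abar = 2 * Real.sqrt (γ * ν))
    (ha₁ : a₁ = 2 * Real.sqrt (γ * ν) - bbar)
    (ha₂ : a₂ = -(2 * Real.sqrt (γ * ν)) - bbar)
    (hf21 : f21 = 2 * (-(1 / (4 * γ)) *
        (abar * Real.exp (-abar ^ 2 / 2) / Real.sqrt (2 * π)
          + (1 / 2) * erfc (abar / Real.sqrt 2))
      + (ν / 2) * erfc (abar / Real.sqrt 2)))
    (hf221 : f221 = -(1 / (4 * γ)) *
        ((a₁ + 2 * bbar) * Real.exp (-a₁ ^ 2 / 2) / Real.sqrt (2 * π)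
          + ((bbar ^ 2 + 1) / 2) * erfc (a₁ / Real.sqrt 2))
      + (ν / 2) * erfc (a₁ / Real.sqrt 2))
    (hf222 : f222 = -(1 / (4 * γ)) *
        (-((a₂ + 2 * bbar) * Real.exp (-a₂ ^ 2 / 2) / Real.sqrt (2 * π))
          + ((bbar ^ 2 + 1) / 2) * erfc (-a₂ / Real.sqrt 2))
      + (ν / 2) * erfc (-a₂ / Real.sqrt 2)) :
    sInf { z : ℝ | ∃ g : ℝ, 0 < g ∧ z = g * r₂ + α * r₂ / (4 * g) }
      - ν₁ * c₁ - γ * r₁ ^ 2 - ν * β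
      + (1 - β) * ∫ h : ℝ, min (ν - h ^ 2 / (4 * γ)) 0 ∂(gaussianReal 0 1)
      + β * ∫ h : ℝ, min (ν - (h + bbar) ^ 2 / (4 * γ)) 0 ∂(gaussianReal 0 1)
    = -(ν₁ * c₁) - γ * r₁ ^ 2 - ν * β + (1 - β) * f21 + β * (f221 + f222)
      + Real.sqrt α * r₂ := by
  have E1 : (∫ h : ℝ, min (ν - h ^ 2 / (4 * γ)) 0 ∂(gaussianReal 0 1)) = f21 := by
    rw [integral_gaussianReal_eq]
    have hc : (fun x : ℝ => min (ν - x ^ 2 / (4 * γ)) 0 * (Real.exp (-x ^ 2 / 2) / Real.sqrt (2 * π)))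
        = fun x : ℝ => min (ν - (x + 0) ^ 2 / (4 * γ)) 0 * (Real.exp (-x ^ 2 / 2) / Real.sqrt (2 * π)) := by
      funext x; rw [add_zero]
    rw [hc, min_closed γ ν 0 hγ hν, hf21, ha]
    norm_num
    ring
  have E2 : (∫ h : ℝ, min (ν - (h + bbar) ^ 2 / (4 * γ)) 0 ∂(gaussianReal 0 1)) = f221 + f222 := by
    rw [integral_gaussianReal_eq, min_closed γ ν bbar hγ hν, hf221, hf222]
    have e1 : -a₂ = 2 * Real.sqrt (γ * ν) + bbar := by rw [ha₂]; ring
    have e2 : a₂ ^ 2 = (2 * Real.sqrt (γ * ν) + bbar) ^ 2 := by rw [ha₂]; ring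
    have e3 : a₂ + 2 * bbar = bbar - 2 * Real.sqrt (γ * ν) := by rw [ha₂]; ring
    rw [e2, e1, e3, ha₁]
    have h4 : (0:ℝ) < 4 * γ := by linarith
    field_simp
    ring
  rw [E1, E2, sInf_eval α r₂ hα hr₂]
  ring
end

section
/- Let γ > 0, ν ≥ 0, c₂ > 0, q₂ ∈ [0,1) and ν₁, d̄, h₃ ∈ ℝ, and assume 2γ > c₂·(1 − q₂). Set D̄ = ( −(h₃·√q₂ + d̄·ν₁) − 2√(γν) )/√(1−q₂), Ē = ( −(h₃·√q₂ + d̄·ν₁) + 2√(γν) )/√(1−q₂), Ā = √(c₂(1−q₂)), B̄₁ = h₃·√(c₂q₂) + √c₂·d̄·ν₁, C̄ = 4γ, F̄ = c₂·d̄·√(1−q₂), B̄ = F̄·C̄/(2Ā) + B̄₁, Ḡ = (B̄₁² − B̄²)/C̄. Then ∫_ℝ exp( c₂·[ ( √(1−q₂)·h + √q₂·h₃ )·d̄ − min( ν − ( √(1−q₂)·h + √q₂·h₃ + ν₁·d̄ )²/(4γ), 0 ) ] ) dγ₁(h) = exp( c₂·d̄·√q₂·h₃ ) · ( Ī₁ +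 Ī₂ ), where Ī₁ = ( √C̄ / (2·√(C̄ − 2Ā²)) ) · exp( −c₂·ν + Ḡ + B̄²/(C̄ − 2Ā²) ) · (2 − Q̄) with Q̄ = erf( (C̄·Ē − 2Ā²·Ē − 2Ā·B̄)/(√2·√C̄·√(C̄ − 2Ā²)) ) − erf( (C̄·D̄ − 2Ā²·D̄ − 2Ā·B̄)/(√2·√C̄·√(C̄ − 2Ā²)) ), and Ī₂ = exp(F̄²/2) · ( (1/2)·erfc((D̄ − F̄)/√2) − (1/2)·erfc((Ē − F̄)/√2) ). -/
open MeasureTheory ProbabilityTheory Real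

lemma erf_integral (p q : ℝ) :
    ∫ u in p..q, Real.exp (-u^2) = (Real.sqrt π / 2) * (erf q - erf p) := by
  have hi : ∀ a c : ℝ, IntervalIntegrable (fun u => Real.exp (-u^2)) volume a c :=
    fun a c => (Continuous.intervalIntegrable (by continuity) a c)
  have h := intervalIntegral.integral_add_adjacent_intervals (hi p 0) (hi 0 q)
  have hsym : (∫ x in p..(0:ℝ), Real.exp (-x^2)) = -∫ x in (0:ℝ)..p, Real.exp (-x^2) :=
    intervalIntegral.integral_symm 0 p
  have hπ : Real.sqrt π ≠ 0 := by positivity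
  rw [← h, hsym]
  unfold erf
  field_simp
  ring

lemma gauss_interval {b : ℝ} (hb : 0 < b) (m D E : ℝ) :
    ∫ x in D..E, Real.exp (-b * (x - m)^2) =
      Real.sqrt π / (2 * Real.sqrt b) *
        (erf (Real.sqrt b * (E - m)) - erf (Real.sqrt b * (D - m))) := by
  have hsb : (0:ℝ) < Real.sqrt b := Real.sqrt_pos.mpr hb
  have hb2 : Real.sqrt b ^ 2 = b := Real.sq_sqrt hb.le
  have h1 : ∀ x : ℝ, Real.exp (-b * (x - m)^2)
      = (fun u => Real.exp (-u^2)) (Real.sqrt b * x + (-(Real.sqrt b * m))) := by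
    intro x
    simp only
    congr 1
    linear_combination (x - m)^2 * hb2
  simp_rw [h1]
  rw [intervalIntegral.integral_comp_mul_add (fun u => Real.exp (-u^2)) hsb.ne' _]
  rw [erf_integral]
  have e1 : Real.sqrt b * E + -(Real.sqrt b * m) = Real.sqrt b * (E - m) := by ring
  have e2 : Real.sqrt b * D + -(Real.sqrt b * m) = Real.sqrt b * (D - m) := by ring
  rw [e1, e2, smul_eq_mul]
  ring

lemma gauss_total {b : ℝ} (hb : 0 < b) (m : ℝ) :
    ∫ x : ℝ, Real.exp (-b * (x - m)^2) = Real.sqrt (π / b) := by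
  rw [← integral_gaussian b]
  exact integral_sub_right_eq_self (fun x => Real.exp (-b * x^2)) m

set_option maxHeartbeats 2000000 in
/-- Evaluation of `E_{U₂} Z₁^{(2)}`, the inner Gaussian average of the
support-coordinate partition term at the second level of lifting. -/
theorem stmt15 (γ ν c₂ q₂ ν₁ dbar h₃ : ℝ) (hγ : 0 < γ) (hν : 0 ≤ ν) (hc : 0 < c₂)
    (hq₂ : q₂ ∈ Set.Ico (0:ℝ) 1) (hkey : c₂ * (1 - q₂) < 2 * γ)
    (Db Eb Ab B₁b Cb Fb Bb Gb : ℝ)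
    (hDb : Db = (-(h₃ * Real.sqrt q₂ + dbar * ν₁) - 2 * Real.sqrt (γ * ν)) /
        Real.sqrt (1 - q₂))
    (hEb : Eb = (-(h₃ * Real.sqrt q₂ + dbar * ν₁) + 2 * Real.sqrt (γ * ν)) /
        Real.sqrt (1 - q₂))
    (hAb : Ab = Real.sqrt (c₂ * (1 - q₂)))
    (hB₁b : B₁b = h₃ * Real.sqrt (c₂ * q₂) + Real.sqrt c₂ * dbar * ν₁)
    (hCb : Cb = 4 * γ)
    (hFb : Fb = c₂ * dbar * Real.sqrt (1 - q₂))
    (hBb : Bb = Fb * Cb / (2 * Ab) + B₁b)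
    (hGb : Gb = (B₁b ^ 2 - Bb ^ 2) / Cb)
    (Qb I₁b I₂b : ℝ)
    (hQb : Qb = erf ((Cb * Eb - 2 * Ab ^ 2 * Eb - 2 * Ab * Bb) /
          (Real.sqrt 2 * Real.sqrt Cb * Real.sqrt (Cb - 2 * Ab ^ 2)))
      - erf ((Cb * Db - 2 * Ab ^ 2 * Db - 2 * Ab * Bb) /
          (Real.sqrt 2 * Real.sqrt Cb * Real.sqrt (Cb - 2 * Ab ^ 2))))
    (hI₁b : I₁b = (Real.sqrt Cb / (2 * Real.sqrt (Cb - 2 * Ab ^ 2))) *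
        Real.exp (-(c₂ * ν) + Gb + Bb ^ 2 / (Cb - 2 * Ab ^ 2)) * (2 - Qb))
    (hI₂b : I₂b = Real.exp (Fb ^ 2 / 2) *
        ((1 / 2) * erfc ((Db - Fb) / Real.sqrt 2)
          - (1 / 2) * erfc ((Eb - Fb) / Real.sqrt 2))) :
    ∫ h : ℝ, Real.exp (c₂ *
        ((Real.sqrt (1 - q₂) * h + Real.sqrt q₂ * h₃) * dbar
          - min (ν - (Real.sqrt (1 - q₂) * h + Real.sqrt q₂ * h₃ + ν₁ * dbar) ^ 2 /
              (4 * γ)) 0)) ∂(gaussianReal 0 1)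
    = Real.exp (c₂ * dbar * Real.sqrt q₂ * h₃) * (I₁b + I₂b) := by
  have h1q : (0:ℝ) < 1 - q₂ := by linarith [hq₂.2]
  set s := Real.sqrt (1 - q₂) with hs_def
  set e := Real.sqrt c₂ with he_def
  set r := Real.sqrt (γ * ν) with hr_def
  have hs : 0 < s := Real.sqrt_pos.mpr h1q
  have hs2 : s ^ 2 = 1 - q₂ := Real.sq_sqrt h1q.le
  have he : 0 < e := Real.sqrt_pos.mpr hc
  have he2 : e ^ 2 = c₂ := Real.sq_sqrt hc.le
  have hr0 : 0 ≤ r := Real.sqrt_nonneg _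
  have hr2 : r ^ 2 = γ * ν := Real.sq_sqrt (by positivity)
  have hAb' : Ab = e * s := by rw [hAb, Real.sqrt_mul hc.le]
  have hB₁' : B₁b = e * (h₃ * Real.sqrt q₂ + dbar * ν₁) := by
    rw [hB₁b, Real.sqrt_mul hc.le]; ring
  have hP : 0 < Cb - 2 * Ab ^ 2 := by
    rw [hCb, hAb']
    have : (e * s) ^ 2 = c₂ * (1 - q₂) := by rw [mul_pow, he2, hs2]
    nlinarith
  have hC0 : 0 < Cb := by rw [hCb]; linarith
  set b₁ : ℝ := (Cb - 2 * Ab ^ 2) / (2 * Cb) with hb₁_def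
  have hb₁ : 0 < b₁ := by positivity
  set m : ℝ := 2 * Ab * Bb / (Cb - 2 * Ab ^ 2) with hm_def
  have hDE : Db ≤ Eb := by
    rw [hDb, hEb]
    gcongr
    linarith
  -- the two Gaussian-shaped functions
  set K₁ : ℝ := (Real.sqrt (2*π))⁻¹ *
      Real.exp (c₂ * dbar * Real.sqrt q₂ * h₃ + (-(c₂ * ν) + Gb + Bb ^ 2 / (Cb - 2 * Ab ^ 2)))
      with hK₁_def
  set K₂ : ℝ := (Real.sqrt (2*π))⁻¹ *
      Real.exp (c₂ * dbar * Real.sqrt q₂ * h₃ + Fb ^ 2 / 2) with hK₂_def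
  have hsd : s * Db = -(h₃ * Real.sqrt q₂ + dbar * ν₁) - 2 * r := by
    rw [hDb]; field_simp
  have hse : s * Eb = -(h₃ * Real.sqrt q₂ + dbar * ν₁) + 2 * r := by
    rw [hEb]; field_simp
  have hP2 : (4 * γ - 2 * (e * s)^2) ≠ 0 := by
    have h := hP
    rw [hCb, hAb'] at h
    exact ne_of_gt h
  have key1 : ∀ x : ℝ, -(x^2)/2 + c₂ * ((s * x + Real.sqrt q₂ * h₃) * dbar - 0)
      = (c₂ * dbar * Real.sqrt q₂ * h₃ + Fb ^ 2 / 2) + (-(1/2 : ℝ) * (x - Fb)^2) := by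
    intro x; rw [hFb]; ring
  have key2 : ∀ x : ℝ, -(x^2)/2 + c₂ * ((s * x + Real.sqrt q₂ * h₃) * dbar
        - (ν - (s * x + Real.sqrt q₂ * h₃ + ν₁ * dbar) ^ 2 / (4 * γ)))
      = (c₂ * dbar * Real.sqrt q₂ * h₃ + (-(c₂ * ν) + Gb + Bb ^ 2 / (Cb - 2 * Ab ^ 2)))
        + (-b₁ * (x - m)^2) := by
    intro x
    rw [hm_def, hb₁_def, hGb, hBb, hB₁', hAb', hCb, hFb, ← he2]
    have hP2' : 4 * γ - 2 * e ^ 2 * s ^ 2 ≠ 0 := by convert hP2 using 1; ring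
    field_simp
    ring
  have hpt : ∀ x : ℝ, (Real.sqrt (2*π))⁻¹ * Real.exp (-(x^2)/2) * Real.exp (c₂ *
        ((s * x + Real.sqrt q₂ * h₃) * dbar
          - min (ν - (s * x + Real.sqrt q₂ * h₃ + ν₁ * dbar) ^ 2 / (4 * γ)) 0))
      = K₁ * Real.exp (-b₁ * (x - m)^2)
        + (Set.Ioc Db Eb).indicator
            (fun y => K₂ * Real.exp (-(1/2 : ℝ) * (y - Fb)^2)
              - K₁ * Real.exp (-b₁ * (y - m)^2)) x := by
    intro x
    by_cases hx : x ∈ Set.Ioc Db Eb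
    · rw [Set.indicator_of_mem hx]
      obtain ⟨hx1, hx2⟩ := hx
      set w : ℝ := s * x + Real.sqrt q₂ * h₃ + ν₁ * dbar with hw_def
      have hw1 : -(2*r) < w := by
        have h := mul_lt_mul_of_pos_left hx1 hs
        rw [hsd] at h
        rw [hw_def]; linarith [h]
      have hw2 : w ≤ 2*r := by
        have h := mul_le_mul_of_nonneg_left hx2 hs.le
        rw [hse] at h
        rw [hw_def]; linarith [h]
      have hmin : min (ν - w ^ 2 / (4 * γ)) 0 = 0 := by
        apply min_eq_right
        have hk := mul_nonneg (by linarith : (0:ℝ) ≤ 2*r - w) (by linarith : (0:ℝ) ≤ 2*r + w)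
        have h4 : w ^ 2 ≤ 4 * (γ * ν) := by linarith [hk, hr2]
        have h5 : w ^ 2 / (4 * γ) ≤ ν := by
          rw [div_le_iff₀ (by linarith : (0:ℝ) < 4 * γ)]
          linarith
        linarith
      rw [hmin]
      have hcollapse : K₁ * Real.exp (-b₁ * (x - m)^2)
          + (K₂ * Real.exp (-(1/2 : ℝ) * (x - Fb)^2) - K₁ * Real.exp (-b₁ * (x - m)^2))
          = K₂ * Real.exp (-(1/2 : ℝ) * (x - Fb)^2) := by ring
      rw [hcollapse, hK₂_def, mul_assoc, mul_assoc, ← Real.exp_add, ← Real.exp_add]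
      congr 1
      exact congrArg Real.exp (key1 x)
    · rw [Set.indicator_of_notMem hx, add_zero]
      rw [Set.mem_Ioc, not_and_or, not_lt, not_le] at hx
      set w : ℝ := s * x + Real.sqrt q₂ * h₃ + ν₁ * dbar with hw_def
      have hmin : min (ν - w ^ 2 / (4 * γ)) 0 = ν - w ^ 2 / (4 * γ) := by
        apply min_eq_left
        have h4 : 4 * (γ * ν) ≤ w ^ 2 := by
          rcases hx with hx | hx
          · have h := mul_le_mul_of_nonneg_left hx hs.le
            rw [hsd] at h
            have hw1 : w ≤ -(2*r) := by rw [hw_def]; linarith [h]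
            have hk := mul_nonneg (by linarith : (0:ℝ) ≤ -w - 2*r)
              (by linarith : (0:ℝ) ≤ -w + 2*r)
            linarith [hk, hr2]
          · have h := mul_le_mul_of_nonneg_left hx.le hs.le
            rw [hse] at h
            have hw1 : 2*r ≤ w := by rw [hw_def]; linarith [h]
            have hk := mul_nonneg (by linarith : (0:ℝ) ≤ w - 2*r)
              (by linarith : (0:ℝ) ≤ w + 2*r)
            linarith [hk, hr2]
        have h5 : ν ≤ w ^ 2 / (4 * γ) := by
          rw [le_div_iff₀ (by linarith : (0:ℝ) < 4 * γ)]
          linarith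
        linarith
      rw [hmin, hw_def, hK₁_def, mul_assoc, mul_assoc, ← Real.exp_add, ← Real.exp_add]
      congr 1
      exact congrArg Real.exp (key2 x)
  have hIntG : Integrable (fun x : ℝ => Real.exp (-b₁ * (x - m)^2)) := by
    simpa using (integrable_exp_neg_mul_sq hb₁).comp_sub_right m
  have hInt1 : Integrable (fun x : ℝ => K₁ * Real.exp (-b₁ * (x - m)^2)) :=
    hIntG.const_mul K₁
  have hcont : Continuous (fun y : ℝ => K₂ * Real.exp (-(1/2 : ℝ) * (y - Fb)^2)
      - K₁ * Real.exp (-b₁ * (y - m)^2)) := by fun_prop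
  have hInt2 : Integrable ((Set.Ioc Db Eb).indicator
      (fun y => K₂ * Real.exp (-(1/2 : ℝ) * (y - Fb)^2)
        - K₁ * Real.exp (-b₁ * (y - m)^2))) :=
    ((intervalIntegrable_iff_integrableOn_Ioc_of_le hDE).mp
      (hcont.intervalIntegrable Db Eb)).integrable_indicator measurableSet_Ioc
  have hpdf : ∀ x : ℝ, gaussianPDFReal 0 1 x
      = (Real.sqrt (2*π))⁻¹ * Real.exp (-(x^2)/2) := by
    intro x
    rw [gaussianPDFReal]
    norm_num
  rw [gaussianReal_of_var_ne_zero 0 one_ne_zero, gaussianPDF_def]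
  simp_rw [ENNReal.ofReal]
  rw [integral_withDensity_eq_integral_smul
    (f := fun x => (gaussianPDFReal 0 1 x).toNNReal)
    (measurable_real_toNNReal.comp (measurable_gaussianPDFReal 0 1))]
  have hfun : (fun x : ℝ => (Real.toNNReal (gaussianPDFReal 0 1 x)) • Real.exp (c₂ *
        ((s * x + Real.sqrt q₂ * h₃) * dbar
          - min (ν - (s * x + Real.sqrt q₂ * h₃ + ν₁ * dbar) ^ 2 / (4 * γ)) 0)))
      = fun x : ℝ => K₁ * Real.exp (-b₁ * (x - m)^2)
        + (Set.Ioc Db Eb).indicator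
            (fun y => K₂ * Real.exp (-(1/2 : ℝ) * (y - Fb)^2)
              - K₁ * Real.exp (-b₁ * (y - m)^2)) x := by
    funext x
    rw [NNReal.smul_def, Real.coe_toNNReal _ (gaussianPDFReal_nonneg 0 1 x), hpdf x]
    exact hpt x
  rw [hfun]
  rw [integral_add hInt1 hInt2, integral_const_mul, gauss_total hb₁,
    integral_indicator measurableSet_Ioc, ← intervalIntegral.integral_of_le hDE]
  rw [intervalIntegral.integral_sub
    ((Continuous.intervalIntegrable (by fun_prop) _ _))
    ((Continuous.intervalIntegrable (by fun_prop) _ _)),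
    intervalIntegral.integral_const_mul, intervalIntegral.integral_const_mul,
    gauss_interval (by norm_num : (0:ℝ) < 1/2) Fb Db Eb, gauss_interval hb₁ m Db Eb]
  have hπ0 : Real.sqrt π ≠ 0 := by positivity
  have h20 : Real.sqrt 2 ≠ 0 := by positivity
  have hC0' : Real.sqrt Cb ≠ 0 := ne_of_gt (Real.sqrt_pos.mpr hC0)
  have hP0' : Real.sqrt (Cb - 2 * Ab ^ 2) ≠ 0 := ne_of_gt (Real.sqrt_pos.mpr hP)
  have hsqP2 : Real.sqrt (Cb - 2 * Ab ^ 2) ^ 2 = Cb - 2 * Ab ^ 2 := Real.sq_sqrt hP.le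
  have h12 : Real.sqrt (1/2 : ℝ) = (Real.sqrt 2)⁻¹ := by rw [one_div, Real.sqrt_inv]
  have h2π : Real.sqrt (2*π) = Real.sqrt 2 * Real.sqrt π := Real.sqrt_mul (by norm_num) _
  have hsqb₁ : Real.sqrt b₁ = Real.sqrt (Cb - 2 * Ab ^ 2) / (Real.sqrt 2 * Real.sqrt Cb) := by
    rw [hb₁_def, Real.sqrt_div hP.le, Real.sqrt_mul (by norm_num) Cb]
  have hπb₁ : Real.sqrt (π / b₁) = Real.sqrt π / Real.sqrt b₁ := Real.sqrt_div pi_pos.le _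
  have hargE : Real.sqrt b₁ * (Eb - m)
      = (Cb * Eb - 2 * Ab ^ 2 * Eb - 2 * Ab * Bb) /
          (Real.sqrt 2 * Real.sqrt Cb * Real.sqrt (Cb - 2 * Ab ^ 2)) := by
    rw [hsqb₁, hm_def]
    field_simp
    linear_combination (Eb * (Cb - 2*Ab^2) - 2*Ab*Bb) * hsqP2
  have hargD : Real.sqrt b₁ * (Db - m)
      = (Cb * Db - 2 * Ab ^ 2 * Db - 2 * Ab * Bb) /
          (Real.sqrt 2 * Real.sqrt Cb * Real.sqrt (Cb - 2 * Ab ^ 2)) := by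
    rw [hsqb₁, hm_def]
    field_simp
    linear_combination (Db * (Cb - 2*Ab^2) - 2*Ab*Bb) * hsqP2
  have hhalfE : Real.sqrt (1/2 : ℝ) * (Eb - Fb) = (Eb - Fb) / Real.sqrt 2 := by
    rw [h12, inv_mul_eq_div]
  have hhalfD : Real.sqrt (1/2 : ℝ) * (Db - Fb) = (Db - Fb) / Real.sqrt 2 := by
    rw [h12, inv_mul_eq_div]
  rw [hargE, hargD, hhalfE, hhalfD, hπb₁, hK₁_def, hK₂_def, hI₁b, hI₂b, hQb,
    hsqb₁, h12, h2π]
  simp only [erfc, Real.exp_add]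
  have h22 : Real.sqrt 2 ^ 2 = 2 := Real.sq_sqrt (by norm_num)
  have h24 : Real.sqrt 2 ^ 4 = 4 := by
    have : Real.sqrt 2 ^ 4 = (Real.sqrt 2 ^ 2) ^ 2 := by ring
    rw [this, h22]; norm_num
  field_simp
  ring_nf
end
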